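/- arXiv:1407.1641 — 3 statements merged into one kernel-verified Lean document; each statement's English description precedes it below -/
import Mathlib

section
/- Let p be a monic complex polynomial of degree M with pairwise distinct roots a_1,…,a_M. Then p'''(a_k) = 3·p'(a_k)·(L_1² − L_2), where L_m = ∑_{j≠k} 1/(a_k − a_j)^m. -/
open Polynomial Finset

lemma iteratedDeriv_eval_poly (n : ℕ) (P : ℂ[X]) :
    iteratedDeriv n (fun x => P.eval x) = fun x => (derivative^[n] P).eval x := by
  induction n with
  | zero => simp
  | succ n ih =>
      rw [iteratedDeriv_succ, ih, Function.iterate_succ_apply']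
      funext x
      exact Polynomial.deriv (𝕜 := ℂ) _

lemma derivative_finset_prod' {ι : Type*} [DecidableEq ι] (s : Finset ι) (f : ι → ℂ[X]) :
    derivative (∏ b ∈ s, f b) = ∑ b ∈ s, (∏ a ∈ s.erase b, f a) * derivative (f b) := by
  rw [Finset.prod_eq_multiset_prod, Polynomial.derivative_prod, Finset.sum_eq_multiset_sum]
  rfl

/-- `p'''(a_k) = 3 p'(a_k) (L₁² − L₂)` where `L_m = ∑_{j≠k} 1/(a_k − a_j)^m`. -/
theorem third_deriv_at_root (M : ℕ) (a : Fin M → ℂ) (ha : Function.Injective a)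
    (p : ℂ → ℂ) (hp : ∀ z, p z = ∏ j, (z - a j)) (k : Fin M)
    (L : ℕ → ℂ) (hL : ∀ m, L m = ∑ j ∈ Finset.univ.erase k, 1 / (a k - a j) ^ m) :
    iteratedDeriv 3 p (a k) = 3 * deriv p (a k) * ((L 1) ^ 2 - L 2) := by
  classical
  set E : Finset (Fin M) := Finset.univ.erase k with hE
  set Q : ℂ[X] := ∏ j ∈ E, (X - C (a j)) with hQdef
  set P : ℂ[X] := (X - C (a k)) * Q with hP
  have hpP : p = fun z => P.eval z := by
    funext z
    rw [hp, ← Finset.mul_prod_erase Finset.univ _ (Finset.mem_univ k)]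
    simp [hP, hQdef, hE, eval_prod]
  have hQ1 : derivative Q = ∑ i ∈ E, ∏ j ∈ E.erase i, (X - C (a j)) := by
    rw [hQdef, derivative_finset_prod']
    simp
  have hQ2 : derivative (derivative Q) =
      ∑ i ∈ E, ∑ l ∈ E.erase i, ∏ j ∈ (E.erase i).erase l, (X - C (a j)) := by
    rw [hQ1, map_sum]
    refine Finset.sum_congr rfl fun i hi => ?_
    rw [derivative_finset_prod']
    simp
  -- derivatives of P
  have hP1 : derivative P = Q + (X - C (a k)) * derivative Q := by
    rw [hP, derivative_mul, derivative_X_sub_C, one_mul]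
  have hP3 : derivative^[3] P =
      3 * derivative (derivative Q) + (X - C (a k)) * derivative^[3] Q := by
    show derivative (derivative (derivative P)) = _
    rw [hP1]
    rw [derivative_add, derivative_mul, derivative_X_sub_C, one_mul]
    rw [derivative_add, derivative_add, derivative_mul, derivative_X_sub_C, one_mul]
    show _ = 3 * derivative (derivative Q) + (X - C (a k)) * derivative (derivative (derivative Q))
    ring
  -- evaluations
  have hLHS : iteratedDeriv 3 p (a k) = 3 * ((derivative (derivative Q)).eval (a k)) := by
    rw [hpP]
    rw [iteratedDeriv_eval_poly]
    simp [hP3]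
  have hderiv : deriv p (a k) = Q.eval (a k) := by
    rw [hpP, Polynomial.deriv, hP1]
    simp
  have hQ2eval : (derivative (derivative Q)).eval (a k) =
      ∑ i ∈ E, ∑ l ∈ E.erase i, ∏ j ∈ (E.erase i).erase l, (a k - a j) := by
    rw [hQ2]
    simp [eval_finset_sum, eval_prod]
  -- nonvanishing
  have hne : ∀ j ∈ E, a k - a j ≠ 0 := by
    intro j hj h
    have hjk : j ≠ k := Finset.ne_of_mem_erase hj
    exact hjk (ha (sub_eq_zero.mp h)).symm
  -- RHS computation
  have hL1sq : (L 1) ^ 2 - L 2 =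
      ∑ i ∈ E, ∑ l ∈ E.erase i, 1 / ((a k - a i) * (a k - a l)) := by
    rw [hL, hL, sq, Finset.sum_mul_sum]
    simp only [pow_one, ← hE]
    rw [← Finset.sum_sub_distrib]
    refine Finset.sum_congr rfl fun i hi => ?_
    rw [← Finset.add_sum_erase E _ hi]
    have : 1 / (a k - a i) * (1 / (a k - a i)) = 1 / (a k - a i) ^ 2 := by
      rw [div_mul_div_comm, one_mul, sq]
    rw [this]
    ring_nf
    refine Finset.sum_congr rfl fun l hl => ?_
    rw [← mul_inv]
    congr 1
    ring
  have key : ∀ i ∈ E, ∀ l ∈ E.erase i,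
      Q.eval (a k) * (1 / ((a k - a i) * (a k - a l))) =
      ∏ j ∈ (E.erase i).erase l, (a k - a j) := by
    intro i hi l hl
    have hQev : Q.eval (a k) = ∏ j ∈ E, (a k - a j) := by simp [hQdef, eval_prod]
    have h1 : ∏ j ∈ E, (a k - a j) = (a k - a i) * ∏ j ∈ E.erase i, (a k - a j) :=
      (Finset.mul_prod_erase E _ hi).symm
    have h2 : ∏ j ∈ E.erase i, (a k - a j)
        = (a k - a l) * ∏ j ∈ (E.erase i).erase l, (a k - a j) :=
      (Finset.mul_prod_erase _ _ hl).symm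
    have hi' := hne i hi
    have hl' := hne l (Finset.mem_of_mem_erase hl)
    rw [hQev, h1, h2]
    field_simp
  rw [hLHS, hQ2eval, hderiv, hL1sq, mul_assoc]
  congr 1
  rw [Finset.mul_sum]
  refine Finset.sum_congr rfl fun i hi => ?_
  rw [Finset.mul_sum]
  exact Finset.sum_congr rfl fun l hl => (key i hi l hl).symm
end

section
/- Let p be a monic complex polynomial of degree M with pairwise distinct roots a_1,…,a_M. Then p''''(a_k) = 4·p'(a_k)·(2L_3 − 3L_1 L_2 + L_1³), where L_m = ∑_{j≠k} 1/(a_k − a_j)^m. -/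
open Polynomial Finset

private lemma eval_iter_deriv (P : Polynomial ℂ) (n : ℕ) :
    iteratedDeriv n (fun x => P.eval x) = fun x => (derivative^[n] P).eval x := by
  induction n with
  | zero => simp
  | succ n ih =>
    rw [iteratedDeriv_succ, ih]
    funext x
    rw [Function.iterate_succ_apply']
    exact Polynomial.deriv _

private lemma key {ι : Type*} [DecidableEq ι] (x : ℂ) (b : ι → ℂ) (s : Finset ι)
    (hb : ∀ j ∈ s, x - b j ≠ 0) :
    (derivative (∏ j ∈ s, (X - C (b j)))).eval x
        = (∏ j ∈ s, (x - b j)) * (∑ j ∈ s, 1 / (x - b j)) ∧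
    (derivative^[2] (∏ j ∈ s, (X - C (b j)))).eval x
        = (∏ j ∈ s, (x - b j)) *
          ((∑ j ∈ s, 1 / (x - b j)) ^ 2 - ∑ j ∈ s, 1 / (x - b j) ^ 2) ∧
    (derivative^[3] (∏ j ∈ s, (X - C (b j)))).eval x
        = (∏ j ∈ s, (x - b j)) *
          ((∑ j ∈ s, 1 / (x - b j)) ^ 3
            - 3 * (∑ j ∈ s, 1 / (x - b j)) * (∑ j ∈ s, 1 / (x - b j) ^ 2)
            + 2 * ∑ j ∈ s, 1 / (x - b j) ^ 3) := by
  induction s using Finset.induction_on with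
  | empty => simp
  | @insert i s hi ih =>
    have hu : x - b i ≠ 0 := hb i (mem_insert_self i s)
    have hb' : ∀ j ∈ s, x - b j ≠ 0 := fun j hj => hb j (mem_insert_of_mem hj)
    obtain ⟨h1, h2, h3⟩ := ih hb'
    set Q : Polynomial ℂ := ∏ j ∈ s, (X - C (b j)) with hQ
    have hQe : eval x Q = ∏ j ∈ s, (x - b j) := by rw [hQ]; simp [eval_prod]
    have hd1 : derivative ((X - C (b i)) * Q) = Q + (X - C (b i)) * derivative Q := by
      simp [derivative_mul]
    have hd2 : derivative^[2] ((X - C (b i)) * Q)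
        = 2 * derivative Q + (X - C (b i)) * derivative^[2] Q := by
      rw [show (2:ℕ) = 1 + 1 from rfl, Function.iterate_add_apply,
        Function.iterate_one, hd1]
      simp [derivative_mul]
      ring
    have hd3 : derivative^[3] ((X - C (b i)) * Q)
        = 3 * derivative^[2] Q + (X - C (b i)) * derivative^[3] Q := by
      rw [show (3:ℕ) = 1 + 2 from rfl, Function.iterate_add_apply,
        Function.iterate_one, hd2]
      simp [derivative_mul, Function.iterate_succ_apply']
      ring
    have hinv : (x - b i) * (1/(x - b i)) = 1 := by field_simp
    simp only [prod_insert hi, sum_insert hi, ← hQ, hd1, hd2, hd3,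
      eval_add, eval_mul, eval_sub, eval_X, eval_C, eval_ofNat, hQe, h1, h2, h3]
    set u := x - b i
    set P := ∏ j ∈ s, (x - b j)
    set S1 := ∑ j ∈ s, 1 / (x - b j)
    set S2 := ∑ j ∈ s, 1 / (x - b j) ^ 2
    set S3 := ∑ j ∈ s, 1 / (x - b j) ^ 3
    clear_value u P S1 S2 S3
    refine ⟨?_, ?_, ?_⟩
    · linear_combination (-P) * hinv
    · linear_combination (-(2*P*S1)) * hinv
    · linear_combination (-(P*(3*S1^2 - 3*S2)) - P*(3*S1*(1/u) + (1/u)^2)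
        + P*(3*S1*(1/u) + 3*(1/u)^2) - 2*P*(1/u)^2) * hinv

/-- `p''''(a_k) = 4 p'(a_k) (2L₃ − 3L₁L₂ + L₁³)` where `L_m = ∑_{j≠k} 1/(a_k − a_j)^m`. -/
theorem fourth_deriv_at_root (M : ℕ) (a : Fin M → ℂ) (ha : Function.Injective a)
    (p : ℂ → ℂ) (hp : ∀ z, p z = ∏ j, (z - a j)) (k : Fin M)
    (L : ℕ → ℂ) (hL : ∀ m, L m = ∑ j ∈ Finset.univ.erase k, 1 / (a k - a j) ^ m) :
    iteratedDeriv 4 p (a k)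
      = 4 * deriv p (a k) * (2 * L 3 - 3 * L 1 * L 2 + (L 1) ^ 3) := by
  have hPQ : (∏ j, (X - C (a j)) : Polynomial ℂ)
      = (X - C (a k)) * ∏ j ∈ Finset.univ.erase k, (X - C (a j)) :=
    (Finset.mul_prod_erase Finset.univ _ (Finset.mem_univ k)).symm
  have hpf : p = fun z => (∏ j, (X - C (a j)) : Polynomial ℂ).eval z := by
    funext z; rw [hp]; simp [eval_prod]
  set Q : Polynomial ℂ := ∏ j ∈ Finset.univ.erase k, (X - C (a j)) with hQdef
  have hd1 : derivative ((X - C (a k)) * Q) = Q + (X - C (a k)) * derivative Q := by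
    simp [derivative_mul]
  have hd2 : derivative^[2] ((X - C (a k)) * Q)
      = 2 * derivative Q + (X - C (a k)) * derivative^[2] Q := by
    rw [show (2:ℕ) = 1 + 1 from rfl, Function.iterate_add_apply,
      Function.iterate_one, hd1]
    simp [derivative_mul]
    ring
  have hd3 : derivative^[3] ((X - C (a k)) * Q)
      = 3 * derivative^[2] Q + (X - C (a k)) * derivative^[3] Q := by
    rw [show (3:ℕ) = 1 + 2 from rfl, Function.iterate_add_apply,
      Function.iterate_one, hd2]
    simp [derivative_mul, Function.iterate_succ_apply']
    ring
  have hd4 : derivative^[4] ((X - C (a k)) * Q)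
      = 4 * derivative^[3] Q + (X - C (a k)) * derivative^[4] Q := by
    rw [show (4:ℕ) = 1 + 3 from rfl, Function.iterate_add_apply,
      Function.iterate_one, hd3]
    simp [derivative_mul, Function.iterate_succ_apply']
    ring
  have hb : ∀ j ∈ Finset.univ.erase k, a k - a j ≠ 0 := by
    intro j hj
    have hjk : j ≠ k := (Finset.mem_erase.mp hj).1
    exact sub_ne_zero.mpr (fun h => hjk (ha h.symm))
  obtain ⟨k1, k2, k3⟩ := key (a k) a (Finset.univ.erase k) hb
  have hQe : eval (a k) Q = ∏ j ∈ Finset.univ.erase k, (a k - a j) := by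
    rw [hQdef]; simp [eval_prod]
  have hderiv : deriv p (a k) = ∏ j ∈ Finset.univ.erase k, (a k - a j) := by
    rw [hpf, Polynomial.deriv, hPQ, hd1]
    simp [hQe]
  have hiter : iteratedDeriv 4 p (a k)
      = 4 * (derivative^[3] Q).eval (a k) := by
    rw [hpf, eval_iter_deriv, hPQ, hd4]
    simp
  rw [hiter, hderiv, hQdef, k3, hL, hL, hL]
  ring_nf
end

section
/- If y(t) = d/dt log(℘'(t − t₀; g₂, g₃)) = ℘''(t−t₀)/℘'(t−t₀), where ℘ is the Weierstrass elliptic function, then y satisfies the Chazy-VII equation y_ttt + y·y_tt + 2y_t² − 2y²·y_t = 0. -/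
set_option maxHeartbeats 1000000 in
private lemma chazy_key_alg (p a g2 : ℂ) (ha : a ≠ 0) :
    (12*(6*p^2 - g2/2) - ((24*a*(6*p^2 - g2/2)*a^2 + 288*p^2*a^3 + 48*p*(6*p^2 - g2/2)*a*(6*p^2 - g2/2) - 72*(6*p^2 - g2/2)^2*p*a)*a^3 - (24*p*(6*p^2 - g2/2)*a^2 - 2*(6*p^2 - g2/2)^3)*(3*a^2*(6*p^2 - g2/2)))/a^6)
    + ((6*p^2 - g2/2)/a) * (12*a - (24*p*(6*p^2 - g2/2)*a^2 - 2*(6*p^2 - g2/2)^3)/a^3)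
    + 2*(12*p - (6*p^2 - g2/2)^2/a^2)^2
    - 2*((6*p^2 - g2/2)/a)^2 * (12*p - (6*p^2 - g2/2)^2/a^2) = 0 := by
  rw [← sub_eq_zero]
  field_simp
  ring_nf

/-- If `P` behaves like the Weierstrass ℘-function on an open set `U`, i.e.
`(P')² = 4P³ − g₂P − g₃` with `P' ≠ 0` and `P` analytic on `U`, then
`y(t) = P''(t−t₀)/P'(t−t₀)` satisfies the Chazy-VII equation
`y''' + y y'' + 2(y')² − 2y² y' = 0`. -/
theorem chazy_VII_from_weierstrass (g₂ g₃ t₀ : ℂ) (U : Set ℂ) (hU : IsOpen U)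
    (P : ℂ → ℂ) (hana : ∀ z ∈ U, AnalyticAt ℂ P z)
    (hode : ∀ z ∈ U, (deriv P z) ^ 2 = 4 * (P z) ^ 3 - g₂ * P z - g₃)
    (hP' : ∀ z ∈ U, deriv P z ≠ 0)
    (y : ℂ → ℂ)
    (hy : ∀ t, y t = iteratedDeriv 2 P (t - t₀) / deriv P (t - t₀)) :
    ∀ t, t - t₀ ∈ U →
      iteratedDeriv 3 y t + y t * iteratedDeriv 2 y t
        + 2 * (deriv y t) ^ 2 - 2 * (y t) ^ 2 * deriv y t = 0 := by
  -- derivative of `deriv P` on `U`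
  have hpp : ∀ z ∈ U, HasDerivAt (deriv P) (6 * P z ^ 2 - g₂ / 2) z := by
    intro z hz
    have hppU : AnalyticOnNhd ℂ (deriv P) U := AnalyticOnNhd.deriv hana
    have hppan : AnalyticAt ℂ (deriv P) z := hppU z hz
    have hd : HasDerivAt (deriv P) (deriv (deriv P) z) z :=
      hppan.differentiableAt.hasDerivAt
    have hPd : HasDerivAt P (deriv P z) z := (hana z hz).differentiableAt.hasDerivAt
    have h1 : HasDerivAt (fun w => (deriv P w) ^ 2)
        (2 * deriv P z * deriv (deriv P) z) z := by
      have := hd.pow 2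
      exact this.congr_deriv (by ring)
    have h2 : HasDerivAt (fun w => 4 * P w ^ 3 - g₂ * P w - g₃)
        (12 * P z ^ 2 * deriv P z - g₂ * deriv P z) z := by
      have := (((hPd.pow 3).const_mul 4).sub (hPd.const_mul g₂)).sub_const g₃
      exact this.congr_deriv (by ring)
    have heq : (fun w => (deriv P w) ^ 2) =ᶠ[nhds z]
        (fun w => 4 * P w ^ 3 - g₂ * P w - g₃) := by
      filter_upwards [hU.mem_nhds hz] with w hw using hode w hw
    have hder : 2 * deriv P z * deriv (deriv P) z
        = 12 * P z ^ 2 * deriv P z - g₂ * deriv P z := by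
      rw [← h1.deriv, heq.deriv_eq, h2.deriv]
    have hval : deriv (deriv P) z = 6 * P z ^ 2 - g₂ / 2 := by
      have hne : (2 : ℂ) * deriv P z ≠ 0 := by
        simpa using hP' z hz
      refine mul_left_cancel₀ hne ?_
      linear_combination hder
    rw [hval] at hd
    exact hd
  intro t ht
  set V : Set ℂ := (fun s : ℂ => s - t₀) ⁻¹' U with hVdef
  have hVopen : IsOpen V := hU.preimage (continuous_id.sub continuous_const)
  have htV : t ∈ V := ht
  have hAne : ∀ s ∈ V, deriv P (s - t₀) ≠ 0 := fun s hs => hP' _ hs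
  have hPt : ∀ s ∈ V, HasDerivAt (fun u => P (u - t₀)) (deriv P (s - t₀)) s := by
    intro s hs
    have h := ((hana _ hs).differentiableAt.hasDerivAt).comp s
      ((hasDerivAt_id s).sub_const t₀)
    simpa [Function.comp_def] using h
  have hA : ∀ s ∈ V, HasDerivAt (fun u => deriv P (u - t₀))
      (6 * P (s - t₀) ^ 2 - g₂ / 2) s := by
    intro s hs
    have h := (hpp _ hs).comp s ((hasDerivAt_id s).sub_const t₀)
    simpa [Function.comp_def] using h
  have hB : ∀ s ∈ V, HasDerivAt (fun u => 6 * P (u - t₀) ^ 2 - g₂ / 2)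
      (12 * P (s - t₀) * deriv P (s - t₀)) s := by
    intro s hs
    have h := (((hPt s hs).pow 2).const_mul 6).sub_const (g₂ / 2)
    exact h.congr_deriv (by ring)
  -- the explicit forms of y and its derivatives on V
  set F0 : ℂ → ℂ := fun u => (6 * P (u - t₀) ^ 2 - g₂ / 2) / deriv P (u - t₀) with hF0def
  set F1 : ℂ → ℂ := fun u => 12 * P (u - t₀)
      - (6 * P (u - t₀) ^ 2 - g₂ / 2) ^ 2 / (deriv P (u - t₀)) ^ 2 with hF1def
  set F2 : ℂ → ℂ := fun u => 12 * deriv P (u - t₀)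
      - (24 * P (u - t₀) * (6 * P (u - t₀) ^ 2 - g₂ / 2) * (deriv P (u - t₀)) ^ 2
          - 2 * (6 * P (u - t₀) ^ 2 - g₂ / 2) ^ 3) / (deriv P (u - t₀)) ^ 3 with hF2def
  set F3 : ℂ → ℂ := fun u => 12 * (6 * P (u - t₀) ^ 2 - g₂ / 2)
      - ((24 * deriv P (u - t₀) * (6 * P (u - t₀) ^ 2 - g₂ / 2) * (deriv P (u - t₀)) ^ 2
            + 288 * P (u - t₀) ^ 2 * (deriv P (u - t₀)) ^ 3
            + 48 * P (u - t₀) * (6 * P (u - t₀) ^ 2 - g₂ / 2) * deriv P (u - t₀)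
                * (6 * P (u - t₀) ^ 2 - g₂ / 2)
            - 72 * (6 * P (u - t₀) ^ 2 - g₂ / 2) ^ 2 * P (u - t₀) * deriv P (u - t₀))
              * (deriv P (u - t₀)) ^ 3
          - (24 * P (u - t₀) * (6 * P (u - t₀) ^ 2 - g₂ / 2) * (deriv P (u - t₀)) ^ 2
              - 2 * (6 * P (u - t₀) ^ 2 - g₂ / 2) ^ 3)
              * (3 * (deriv P (u - t₀)) ^ 2 * (6 * P (u - t₀) ^ 2 - g₂ / 2)))
        / (deriv P (u - t₀)) ^ 6 with hF3def
  have hyF0 : ∀ s ∈ V, y s = F0 s := by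
    intro s hs
    rw [hy s]
    have h2 : iteratedDeriv 2 P (s - t₀) = 6 * P (s - t₀) ^ 2 - g₂ / 2 := by
      rw [show (2 : ℕ) = 1 + 1 from rfl, iteratedDeriv_succ, iteratedDeriv_one]
      exact (hpp _ hs).deriv
    rw [h2]
  have hF0' : ∀ s ∈ V, HasDerivAt F0 (F1 s) s := by
    intro s hs
    have h := (hB s hs).div (hA s hs) (hAne s hs)
    refine h.congr_deriv ?_
    symm
    have ha2 : (deriv P (s - t₀)) ^ 2 ≠ 0 := pow_ne_zero 2 (hAne s hs)
    rw [eq_div_iff ha2, sub_mul, div_mul_cancel₀ _ ha2]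
    ring
  have hF1' : ∀ s ∈ V, HasDerivAt F1 (F2 s) s := by
    intro s hs
    have h := ((hPt s hs).const_mul 12).sub
      (((hB s hs).pow 2).div ((hA s hs).pow 2) (pow_ne_zero 2 (hAne s hs)))
    refine h.congr_deriv ?_
    symm
    simp only [hF2def]
    congr 1
    simp only [Pi.pow_apply, Pi.mul_apply, Pi.sub_apply]
    rw [div_eq_div_iff (pow_ne_zero 3 (hAne s hs))
      (pow_ne_zero 2 (pow_ne_zero 2 (hAne s hs)))]
    push_cast
    ring
  have hF2' : ∀ s ∈ V, HasDerivAt F2 (F3 s) s := by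
    intro s hs
    have hnum := ((((hPt s hs).const_mul 24).mul (hB s hs)).mul ((hA s hs).pow 2)).sub
      (((hB s hs).pow 3).const_mul 2)
    have h := ((hA s hs).const_mul 12).sub
      (hnum.div ((hA s hs).pow 3) (pow_ne_zero 3 (hAne s hs)))
    refine h.congr_deriv ?_
    symm
    simp only [hF3def]
    congr 1
    simp only [Pi.pow_apply, Pi.mul_apply, Pi.sub_apply]
    rw [div_eq_div_iff (pow_ne_zero 6 (hAne s hs))
      (pow_ne_zero 2 (pow_ne_zero 3 (hAne s hs)))]
    push_cast
    ring
  have hyd : ∀ s ∈ V, deriv y s = F1 s := by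
    intro s hs
    have he : y =ᶠ[nhds s] F0 := by
      filter_upwards [hVopen.mem_nhds hs] with u hu using hyF0 u hu
    rw [he.deriv_eq, (hF0' s hs).deriv]
  have hyd2 : ∀ s ∈ V, iteratedDeriv 2 y s = F2 s := by
    intro s hs
    rw [show (2 : ℕ) = 1 + 1 from rfl, iteratedDeriv_succ, iteratedDeriv_one]
    have he : deriv y =ᶠ[nhds s] F1 := by
      filter_upwards [hVopen.mem_nhds hs] with u hu using hyd u hu
    rw [he.deriv_eq, (hF1' s hs).deriv]
  have hyd3 : iteratedDeriv 3 y t = F3 t := by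
    rw [show (3 : ℕ) = 2 + 1 from rfl, iteratedDeriv_succ]
    have he : iteratedDeriv 2 y =ᶠ[nhds t] F2 := by
      filter_upwards [hVopen.mem_nhds htV] with u hu using hyd2 u hu
    rw [he.deriv_eq, (hF2' t htV).deriv]
  rw [hyd3, hyd2 t htV, hyd t htV, hyF0 t htV]
  exact chazy_key_alg (P (t - t₀)) (deriv P (t - t₀)) g₂ (hAne t htV)
end
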